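/- arXiv:cs/0204002 — 2 statements merged into one kernel-verified Lean document; each statement's English description precedes it below -/
import Mathlib

section
/- On the square grid ℤ², the span of any finite configuration is a disjoint union of full rectangles of lattice points, any two of which are at L¹-distance at least 3 from each other. -/
/-- The span of a set of positions: the least superset closed under adding any
vertex adjacent to at least 2 vertices of the set. -/
def Span {P : Type*} (G : SimpleGraph P) (C : Set P) : Set P :=
  ⋂₀ {S : Set P | C ⊆ S ∧ ∀ p, (∃ a ∈ S, ∃ b ∈ S, a ≠ b ∧ G.Adj p a ∧ G.Adj p b) → p ∈ S}


/-- The square grid on ℤ². -/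
def Grid : SimpleGraph (ℤ × ℤ) where
  Adj p q := |p.1 - q.1| + |p.2 - q.2| = 1
  symm := ⟨by intro p q h; (try dsimp only at h ⊢); rw [abs_sub_comm q.1 p.1, abs_sub_comm q.2 p.2]; exact h⟩
  loopless := ⟨by intro p; simp⟩

namespace SpanAux

/-- Closedness under the span rule. -/
def Closed (T : Set (ℤ × ℤ)) : Prop :=
  ∀ p : ℤ × ℤ, (∃ a ∈ T, ∃ b ∈ T, a ≠ b ∧ Grid.Adj p a ∧ Grid.Adj p b) → p ∈ T

lemma adj_iff (p q : ℤ × ℤ) : Grid.Adj p q ↔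
    (p.1 = q.1 ∧ (p.2 = q.2 + 1 ∨ q.2 = p.2 + 1)) ∨
    (p.2 = q.2 ∧ (p.1 = q.1 + 1 ∨ q.1 = p.1 + 1)) := by
  show |p.1 - q.1| + |p.2 - q.2| = 1 ↔ _
  rcases abs_cases (p.1 - q.1) with ⟨h1, s1⟩ | ⟨h1, s1⟩ <;>
    rcases abs_cases (p.2 - q.2) with ⟨h2, s2⟩ | ⟨h2, s2⟩ <;>
    rw [h1, h2] <;> omega

lemma adj' (x y x' y' : ℤ)
    (h : (x = x' ∧ (y = y' + 1 ∨ y' = y + 1)) ∨ (y = y' ∧ (x = x' + 1 ∨ x' = x + 1))) :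
    Grid.Adj (x, y) (x', y') := (adj_iff (x, y) (x', y')).2 h

lemma ne' {x y x' y' : ℤ} (h : x ≠ x' ∨ y ≠ y') : (x, y) ≠ (x', y') := by
  intro hc; rw [Prod.mk.injEq] at hc; rcases h with h | h <;> exact h (by omega)

lemma Closed.mem {T : Set (ℤ × ℤ)} (hT : Closed T) {p a b : ℤ × ℤ} (ha : a ∈ T) (hb : b ∈ T)
    (hab : a ≠ b) (h1 : Grid.Adj p a) (h2 : Grid.Adj p b) : p ∈ T :=
  hT p ⟨a, ha, b, hb, hab, h1, h2⟩

lemma closed_comap (f : ℤ × ℤ → ℤ × ℤ)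
    (hf : ∀ p q, Grid.Adj (f p) (f q) ↔ Grid.Adj p q) (hinj : Function.Injective f)
    {T : Set (ℤ × ℤ)} (hT : Closed T) : Closed (f ⁻¹' T) := by
  rintro p ⟨a, ha, b, hb, hab, h1, h2⟩
  exact hT.mem ha hb (fun h => hab (hinj h)) ((hf p a).2 h1) ((hf p b).2 h2)

lemma fill_right {T : Set (ℤ × ℤ)} (hT : Closed T) {y ys s b : ℤ}
    (hy : y = ys + 1 ∨ ys = y + 1) (hs : (s, y) ∈ T)
    (hsup : ∀ x, s < x → x ≤ b → (x, ys) ∈ T) :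
    ∀ x, s ≤ x → x ≤ b → (x, y) ∈ T := by
  have key : ∀ n : ℕ, ∀ x : ℤ, x = s + n → x ≤ b → (x, y) ∈ T := by
    intro n
    induction n with
    | zero => intro x hx _; have hxs : x = s := by omega
              rw [hxs]; exact hs
    | succ n ih =>
      intro x hx hxb
      have h1 : (x - 1, y) ∈ T := ih (x - 1) (by omega) (by omega)
      have h2 : (x, ys) ∈ T := hsup x (by omega) hxb
      exact hT.mem h1 h2 (ne' (Or.inl (by omega)))
        (adj' _ _ _ _ (by omega)) (adj' _ _ _ _ (by omega))
  intro x hx1 hx2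
  exact key (x - s).toNat x (by omega) hx2

lemma fill_left {T : Set (ℤ × ℤ)} (hT : Closed T) {y ys s a : ℤ}
    (hy : y = ys + 1 ∨ ys = y + 1) (hs : (s, y) ∈ T)
    (hsup : ∀ x, a ≤ x → x < s → (x, ys) ∈ T) :
    ∀ x, a ≤ x → x ≤ s → (x, y) ∈ T := by
  have key : ∀ n : ℕ, ∀ x : ℤ, x = s - n → a ≤ x → (x, y) ∈ T := by
    intro n
    induction n with
    | zero => intro x hx _; have hxs : x = s := by omega
              rw [hxs]; exact hs
    | succ n ih =>
      intro x hx hxa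
      have h1 : (x + 1, y) ∈ T := ih (x + 1) (by omega) (by omega)
      have h2 : (x, ys) ∈ T := hsup x hxa (by omega)
      exact hT.mem h1 h2 (ne' (Or.inl (by omega)))
        (adj' _ _ _ _ (by omega)) (adj' _ _ _ _ (by omega))
  intro x hx1 hx2
  exact key (s - x).toNat x (by omega) hx1

/-- Fill a whole row next to a fully present row, given one seed in the new row. -/
lemma row_above {T : Set (ℤ × ℤ)} (hT : Closed T) {a b d u y : ℤ}
    (hy : y = d + 1 ∨ d = y + 1) (hau : a ≤ u) (hub : u ≤ b) (hseed : (u, y) ∈ T)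
    (hrow : ∀ x, a ≤ x → x ≤ b → (x, d) ∈ T) :
    ∀ x, a ≤ x → x ≤ b → (x, y) ∈ T := by
  intro x hx1 hx2
  rcases le_total u x with h | h
  · exact fill_right hT hy hseed (fun x' h1 h2 => hrow x' (by omega) h2) x h hx2
  · exact fill_left hT hy hseed (fun x' h1 h2 => hrow x' h1 (by omega)) x hx1 h

lemma col_beside {T : Set (ℤ × ℤ)} (hT : Closed T) {c d x xs s : ℤ}
    (hx : x = xs + 1 ∨ xs = x + 1) (hcs : c ≤ s) (hsd : s ≤ d) (hseed : (x, s) ∈ T)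
    (hcol : ∀ y, c ≤ y → y ≤ d → (xs, y) ∈ T) :
    ∀ y, c ≤ y → y ≤ d → (x, y) ∈ T := by
  have hadj : ∀ p q : ℤ × ℤ, Grid.Adj ((p.2, p.1)) ((q.2, q.1)) ↔ Grid.Adj p q := by
    intro p q; rw [adj_iff, adj_iff]; tauto
  have hT' : Closed ((fun p : ℤ × ℤ => (p.2, p.1)) ⁻¹' T) :=
    closed_comap _ hadj (fun p q h => by
      have h1 := congrArg Prod.fst h; have h2 := congrArg Prod.snd h
      exact Prod.ext h2 h1) hT
  have := row_above hT' (a := c) (b := d) (d := xs) (u := s) (y := x) hx hcs hsd hseed hcol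
  exact fun y h1 h2 => this y h1 h2

/-- Extending a full rectangle upward by a seed above it. -/
lemma sideU {T : Set (ℤ × ℤ)} (hT : Closed T) {a b c d u v : ℤ}
    (hcd : c ≤ d) (hau : a ≤ u) (hub : u ≤ b) (hv : v = d + 1 ∨ v = d + 2)
    (hR : ∀ x y, a ≤ x → x ≤ b → c ≤ y → y ≤ d → (x, y) ∈ T)
    (huv : (u, v) ∈ T) :
    ∀ x y, a ≤ x → x ≤ b → c ≤ y → y ≤ v → (x, y) ∈ T := by
  have hrowd : ∀ x, a ≤ x → x ≤ b → (x, d) ∈ T := fun x h1 h2 => hR x d h1 h2 hcd le_rfl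
  rcases hv with rfl | rfl
  · have hrow := row_above hT (Or.inl rfl) hau hub huv hrowd
    intro x y hx1 hx2 hy1 hy2
    rcases (by omega : y ≤ d ∨ y = d + 1) with h | rfl
    · exact hR x y hx1 hx2 hy1 h
    · exact hrow x hx1 hx2
  · have h1 : (u, d + 1) ∈ T :=
      hT.mem huv (hR u d hau hub hcd le_rfl) (ne' (Or.inr (by omega)))
        (adj' _ _ _ _ (by omega)) (adj' _ _ _ _ (by omega))
    have hrow1 := row_above hT (Or.inl rfl) hau hub h1 hrowd
    have hrow2 := row_above hT (d := d + 1) (y := d + 2) (Or.inl (by ring)) hau hub huv hrow1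
    intro x y hx1 hx2 hy1 hy2
    rcases (by omega : y ≤ d ∨ y = d + 1 ∨ y = d + 2) with h | rfl | rfl
    · exact hR x y hx1 hx2 hy1 h
    · exact hrow1 x hx1 hx2
    · exact hrow2 x hx1 hx2

/-- Extending a full rectangle by a seed at its upper-right diagonal corner. -/
lemma cornerRU {T : Set (ℤ × ℤ)} (hT : Closed T) {a b c d u v : ℤ} (hab : a ≤ b) (hcd : c ≤ d)
    (hR : ∀ x y, a ≤ x → x ≤ b → c ≤ y → y ≤ d → (x, y) ∈ T)
    (hu : u = b + 1) (hv : v = d + 1) (huv : (u, v) ∈ T) :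
    ∀ x y, a ≤ x → x ≤ b + 1 → c ≤ y → y ≤ d + 1 → (x, y) ∈ T := by
  subst hu hv
  have hbd : (b, d) ∈ T := hR b d hab le_rfl hcd le_rfl
  have h1 : (b + 1, d) ∈ T :=
    hT.mem hbd huv (ne' (Or.inl (by omega))) (adj' _ _ _ _ (by omega)) (adj' _ _ _ _ (by omega))
  have h2 : (b, d + 1) ∈ T :=
    hT.mem hbd huv (ne' (Or.inl (by omega))) (adj' _ _ _ _ (by omega)) (adj' _ _ _ _ (by omega))
  have hcol := col_beside hT (x := b + 1) (xs := b) (Or.inl rfl) hcd le_rfl h1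
    (fun y hy1 hy2 => hR b y hab le_rfl hy1 hy2)
  have hrow := row_above hT (Or.inl rfl) hab le_rfl h2
    (fun x hx1 hx2 => hR x d hx1 hx2 hcd le_rfl)
  intro x y hx1 hx2 hy1 hy2
  rcases (by omega : x ≤ b ∨ x = b + 1) with hx | rfl
  · rcases (by omega : y ≤ d ∨ y = d + 1) with hy | rfl
    · exact hR x y hx1 hx hy1 hy
    · exact hrow x hx1 hx
  · rcases (by omega : y ≤ d ∨ y = d + 1) with hy | rfl
    · exact hcol y hy1 hy
    · exact huv

section symmetries

lemma adj_negx : ∀ p q : ℤ × ℤ, Grid.Adj ((-p.1, p.2)) ((-q.1, q.2)) ↔ Grid.Adj p q := by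
  intro p q; rw [adj_iff, adj_iff]; simp only []; omega

lemma adj_negy : ∀ p q : ℤ × ℤ, Grid.Adj ((p.1, -p.2)) ((q.1, -q.2)) ↔ Grid.Adj p q := by
  intro p q; rw [adj_iff, adj_iff]; simp only []; omega

lemma adj_swap : ∀ p q : ℤ × ℤ, Grid.Adj ((p.2, p.1)) ((q.2, q.1)) ↔ Grid.Adj p q := by
  intro p q; rw [adj_iff, adj_iff]; tauto

lemma adj_swapneg : ∀ p q : ℤ × ℤ, Grid.Adj ((-p.2, p.1)) ((-q.2, q.1)) ↔ Grid.Adj p q := by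
  intro p q; rw [adj_iff, adj_iff]; simp only []; omega

lemma adj_negboth : ∀ p q : ℤ × ℤ, Grid.Adj ((-p.1, -p.2)) ((-q.1, -q.2)) ↔ Grid.Adj p q := by
  intro p q; rw [adj_iff, adj_iff]; simp only []; omega

lemma inj2 {f g : ℤ × ℤ → ℤ} (hfg : ∀ p q : ℤ × ℤ, f p = f q → g p = g q → p = q) :
    Function.Injective (fun p => ((f p, g p) : ℤ × ℤ)) := by
  intro p q h
  exact hfg p q (congrArg Prod.fst h) (congrArg Prod.snd h)

end symmetries

/-- The merging lemma: a closed set containing a full rectangle and an extra point at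
`L¹`-distance at most 2 from the rectangle contains the bounding box of both. -/
lemma merge {T : Set (ℤ × ℤ)} (hT : Closed T) {a b c d u v w1 w2 : ℤ}
    (hR : ∀ x y, a ≤ x → x ≤ b → c ≤ y → y ≤ d → (x, y) ∈ T)
    (hw1 : a ≤ w1) (hw2 : w1 ≤ b) (hw3 : c ≤ w2) (hw4 : w2 ≤ d)
    (hdist : |u - w1| + |v - w2| ≤ 2) (huv : (u, v) ∈ T) :
    ∀ x y, min a u ≤ x → x ≤ max b u → min c v ≤ y → y ≤ max d v → (x, y) ∈ T := by
  have hab : a ≤ b := le_trans hw1 hw2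
  have hcd : c ≤ d := le_trans hw3 hw4
  have k1 : (u - w1) + (v - w2) ≤ 2 := by
    have := le_abs_self (u - w1); have := le_abs_self (v - w2); linarith
  have k2 : (u - w1) + (w2 - v) ≤ 2 := by
    have := le_abs_self (u - w1); have := neg_le_abs (v - w2); linarith
  have k3 : (w1 - u) + (v - w2) ≤ 2 := by
    have := neg_le_abs (u - w1); have := le_abs_self (v - w2); linarith
  have k4 : (w1 - u) + (w2 - v) ≤ 2 := by
    have := neg_le_abs (u - w1); have := neg_le_abs (v - w2); linarith
  clear hdist
  intro x y hx1 hx2 hy1 hy2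
  rcases (by omega : (a ≤ u ∧ u ≤ b) ∨ u < a ∨ b < u) with ⟨hu1, hu2⟩ | hu | hu <;>
    rcases (by omega : (c ≤ v ∧ v ≤ d) ∨ v < c ∨ d < v) with ⟨hv1, hv2⟩ | hv | hv
  · -- interior
    exact hR x y (by omega) (by omega) (by omega) (by omega)
  · -- M,D via y-negation
    have hT' : Closed ((fun p : ℤ × ℤ => (p.1, -p.2)) ⁻¹' T) :=
      closed_comap _ adj_negy (inj2 (by intro p q h1 h2; exact Prod.ext h1 (by omega))) hT
    have := sideU hT' (a := a) (b := b) (c := -d) (d := -c) (u := u) (v := -v)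
      (by omega) hu1 hu2 (by omega)
      (fun x' y' h1 h2 h3 h4 => show (x', -y') ∈ T from hR x' (-y') h1 h2 (by omega) (by omega))
      (by simpa using huv)
    have h := this x (-y) (by omega) (by omega) (by omega) (by omega)
    simpa using h
  · -- M,U
    exact sideU hT hcd hu1 hu2 (by omega) hR huv x y (by omega) (by omega) (by omega) (by omega)
  · -- L,M via swap-neg : f p = (-p.2, p.1)
    have hT' : Closed ((fun p : ℤ × ℤ => (-p.2, p.1)) ⁻¹' T) :=
      closed_comap _ adj_swapneg (inj2 (by intro p q h1 h2; exact Prod.ext h2 (by omega))) hT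
    have := sideU hT' (a := c) (b := d) (c := -b) (d := -a) (u := v) (v := -u)
      (by omega) hv1 hv2 (by omega)
      (fun x' y' h1 h2 h3 h4 => show (-y', x') ∈ T from hR (-y') x' (by omega) (by omega) h1 h2)
      (by simpa using huv)
    have h := this y (-x) (by omega) (by omega) (by omega) (by omega)
    simpa using h
  · -- L,D via both negations
    have hT' : Closed ((fun p : ℤ × ℤ => (-p.1, -p.2)) ⁻¹' T) :=
      closed_comap _ adj_negboth
        (inj2 (by intro p q h1 h2; exact Prod.ext (by omega) (by omega))) hT
    have := cornerRU hT' (a := -b) (b := -a) (c := -d) (d := -c) (u := -u) (v := -v)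
      (by omega) (by omega)
      (fun x' y' h1 h2 h3 h4 =>
        show (-x', -y') ∈ T from hR (-x') (-y') (by omega) (by omega) (by omega) (by omega))
      (by omega) (by omega) (by simpa using huv)
    have h := this (-x) (-y) (by omega) (by omega) (by omega) (by omega)
    simpa using h
  · -- L,U via x-negation
    have hT' : Closed ((fun p : ℤ × ℤ => (-p.1, p.2)) ⁻¹' T) :=
      closed_comap _ adj_negx (inj2 (by intro p q h1 h2; exact Prod.ext (by omega) h2)) hT
    have := cornerRU hT' (a := -b) (b := -a) (c := c) (d := d) (u := -u) (v := v)
      (by omega) hcd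
      (fun x' y' h1 h2 h3 h4 => show (-x', y') ∈ T from hR (-x') y' (by omega) (by omega) h3 h4)
      (by omega) (by omega) (by simpa using huv)
    have h := this (-x) y (by omega) (by omega) (by omega) (by omega)
    simpa using h
  · -- R,M via swap
    have hT' : Closed ((fun p : ℤ × ℤ => (p.2, p.1)) ⁻¹' T) :=
      closed_comap _ adj_swap (inj2 (by intro p q h1 h2; exact Prod.ext h2 h1)) hT
    have := sideU hT' (a := c) (b := d) (c := a) (d := b) (u := v) (v := u)
      hab hv1 hv2 (by omega)
      (fun x' y' h1 h2 h3 h4 => show (y', x') ∈ T from hR y' x' h3 h4 h1 h2)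
      (by simpa using huv)
    exact this y x (by omega) (by omega) (by omega) (by omega)
  · -- R,D via y-negation
    have hT' : Closed ((fun p : ℤ × ℤ => (p.1, -p.2)) ⁻¹' T) :=
      closed_comap _ adj_negy (inj2 (by intro p q h1 h2; exact Prod.ext h1 (by omega))) hT
    have := cornerRU hT' (a := a) (b := b) (c := -d) (d := -c) (u := u) (v := -v)
      hab (by omega)
      (fun x' y' h1 h2 h3 h4 => show (x', -y') ∈ T from hR x' (-y') h1 h2 (by omega) (by omega))
      (by omega) (by omega) (by simpa using huv)
    have h := this x (-y) (by omega) (by omega) (by omega) (by omega)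
    simpa using h
  · -- R,U
    exact cornerRU hT hab hcd hR (by omega) (by omega) huv x y (by omega) (by omega) (by omega)
      (by omega)

lemma rect_closed (a b c d : ℤ) : Closed (Set.Icc a b ×ˢ Set.Icc c d) := by
  rintro p ⟨q, hq, r, hr, hqr, h1, h2⟩
  rw [adj_iff] at h1 h2
  simp only [Set.mem_prod, Set.mem_Icc] at hq hr ⊢
  have hne : q.1 ≠ r.1 ∨ q.2 ≠ r.2 := by
    by_contra h
    push_neg at h
    exact hqr (Prod.ext h.1 h.2)
  omega

lemma empty_closed : Closed (∅ : Set (ℤ × ℤ)) := by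
  rintro p ⟨a, ha, -⟩; exact ha.elim

lemma span_le {C S : Set (ℤ × ℤ)} (h1 : C ⊆ S) (h2 : Closed S) : Span Grid C ⊆ S :=
  Set.sInter_subset_of_mem ⟨h1, h2⟩

lemma span_closed (C : Set (ℤ × ℤ)) : Closed (Span Grid C) := by
  rintro p ⟨a, ha, b, hb, hab, h1, h2⟩
  intro S hS
  exact hS.2 p ⟨a, ha S hS, b, hb S hS, hab, h1, h2⟩

lemma span_finite (C : Finset (ℤ × ℤ)) : (Span Grid ↑C).Finite := by
  rcases C.eq_empty_or_nonempty with rfl | hne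
  · exact Set.finite_empty.subset (span_le (by simp) empty_closed)
  · have h1 := (C.image Prod.fst).min'_le
    have h2 := (C.image Prod.fst).le_max'
    have h3 := (C.image Prod.snd).min'_le
    have h4 := (C.image Prod.snd).le_max'
    refine (((Set.finite_Icc ((C.image Prod.fst).min' (hne.image _))
      ((C.image Prod.fst).max' (hne.image _))).prod
      (Set.finite_Icc ((C.image Prod.snd).min' (hne.image _))
      ((C.image Prod.snd).max' (hne.image _)))).subset (span_le ?_ (rect_closed _ _ _ _)))
    intro q hq
    simp only [Set.mem_prod, Set.mem_Icc]
    have hq' : q ∈ C := hq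
    exact ⟨⟨h1 _ (Finset.mem_image_of_mem _ hq'), h2 _ (Finset.mem_image_of_mem _ hq')⟩,
      h3 _ (Finset.mem_image_of_mem _ hq'), h4 _ (Finset.mem_image_of_mem _ hq')⟩

/-- One step of the reachability relation: both points in `S`, at distance at most 2. -/
def StepRel (S : Set (ℤ × ℤ)) (p q : ℤ × ℤ) : Prop :=
  p ∈ S ∧ q ∈ S ∧ |p.1 - q.1| + |p.2 - q.2| ≤ 2

def Reach (S : Set (ℤ × ℤ)) : ℤ × ℤ → ℤ × ℤ → Prop := Relation.ReflTransGen (StepRel S)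

lemma stepRel_symm (S : Set (ℤ × ℤ)) : Symmetric (StepRel S) := by
  rintro p q ⟨h1, h2, h3⟩
  exact ⟨h2, h1, by rwa [abs_sub_comm q.1 p.1, abs_sub_comm q.2 p.2]⟩

lemma reach_symm {S : Set (ℤ × ℤ)} {p q : ℤ × ℤ} (h : Reach S p q) : Reach S q p :=
  by haveI : Std.Symm (StepRel S) := ⟨stepRel_symm S⟩
     exact (Relation.ReflTransGen.stdSymm (r := StepRel S)).symm _ _ h

/-- The component of `p` within `S` under `Reach`. -/
def comp (S : Set (ℤ × ℤ)) (p : ℤ × ℤ) : Set (ℤ × ℤ) := {q | q ∈ S ∧ Reach S p q}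

lemma mem_comp_self {S : Set (ℤ × ℤ)} {p : ℤ × ℤ} (hp : p ∈ S) : p ∈ comp S p :=
  ⟨hp, Relation.ReflTransGen.refl⟩

lemma comp_eq_of_mem {S : Set (ℤ × ℤ)} {p q : ℤ × ℤ} (hq : q ∈ comp S p) :
    comp S q = comp S p := by
  ext r
  exact ⟨fun hr => ⟨hr.1, hq.2.trans hr.2⟩, fun hr => ⟨hr.1, (reach_symm hq.2).trans hr.2⟩⟩

lemma comp_closed {S : Set (ℤ × ℤ)} (hS : Closed S) (p : ℤ × ℤ) : Closed (comp S p) := by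
  rintro z ⟨a, ha, b, hb, hab, h1, h2⟩
  have hz : z ∈ S := hS.mem ha.1 hb.1 hab h1 h2
  refine ⟨hz, ha.2.tail ⟨ha.1, hz, ?_⟩⟩
  have h3 : |a.1 - z.1| + |a.2 - z.2| = 1 := h1.symm
  exact le_trans (le_of_eq h3) one_le_two

lemma box_subset_comp {S : Set (ℤ × ℤ)} (hS : Closed S) {p q q' : ℤ × ℤ}
    (hq : q ∈ comp S p) (hr : Reach S q q') :
    ∀ x y, min q.1 q'.1 ≤ x → x ≤ max q.1 q'.1 → min q.2 q'.2 ≤ y → y ≤ max q.2 q'.2 →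
      (x, y) ∈ comp S p := by
  induction hr with
  | refl =>
    intro x y h1 h2 h3 h4
    have hx : x = q.1 := by omega
    have hy : y = q.2 := by omega
    rw [hx, hy]
    exact hq
  | @tail m c hqm hstep ih =>
    obtain ⟨hmS, hcS, hdist⟩ := hstep
    have hc : c ∈ comp S p := ⟨hcS, (hq.2.trans hqm).tail ⟨hmS, hcS, hdist⟩⟩
    intro x y h1 h2 h3 h4
    have hmerge := merge (comp_closed hS p)
      (a := min q.1 m.1) (b := max q.1 m.1) (c := min q.2 m.2) (d := max q.2 m.2)
      (u := c.1) (v := c.2) (w1 := m.1) (w2 := m.2)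
      (fun x' y' hh1 hh2 hh3 hh4 => ih x' y' hh1 hh2 hh3 hh4)
      (by omega) (by omega) (by omega) (by omega)
      (by rwa [abs_sub_comm c.1 m.1, abs_sub_comm c.2 m.2]) hc
    exact hmerge x y (by omega) (by omega) (by omega) (by omega)

lemma pair_box {S : Set (ℤ × ℤ)} (hS : Closed S) {p q q' : ℤ × ℤ}
    (hq : q ∈ comp S p) (hq' : q' ∈ comp S p) :
    ∀ x y, min q.1 q'.1 ≤ x → x ≤ max q.1 q'.1 → min q.2 q'.2 ≤ y → y ≤ max q.2 q'.2 →
      (x, y) ∈ comp S p :=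
  box_subset_comp hS hq ((reach_symm hq.2).trans hq'.2)

lemma comp_is_rect {S : Set (ℤ × ℤ)} (hS : Closed S) (hfin : S.Finite) {p : ℤ × ℤ}
    (hp : p ∈ S) : ∃ a b c d : ℤ, comp S p = Set.Icc a b ×ˢ Set.Icc c d := by
  have hfin' : (comp S p).Finite := hfin.subset fun q hq => hq.1
  have hpc : p ∈ hfin'.toFinset := hfin'.mem_toFinset.2 (mem_comp_self hp)
  have hne : hfin'.toFinset.Nonempty := ⟨p, hpc⟩
  refine ⟨(hfin'.toFinset.image Prod.fst).min' (hne.image _),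
    (hfin'.toFinset.image Prod.fst).max' (hne.image _),
    (hfin'.toFinset.image Prod.snd).min' (hne.image _),
    (hfin'.toFinset.image Prod.snd).max' (hne.image _), ?_⟩
  ext z
  simp only [Set.mem_prod, Set.mem_Icc]
  constructor
  · intro hz
    have hzF : z ∈ hfin'.toFinset := hfin'.mem_toFinset.2 hz
    exact ⟨⟨Finset.min'_le _ _ (Finset.mem_image_of_mem _ hzF),
      Finset.le_max' _ _ (Finset.mem_image_of_mem _ hzF)⟩,
      Finset.min'_le _ _ (Finset.mem_image_of_mem _ hzF),
      Finset.le_max' _ _ (Finset.mem_image_of_mem _ hzF)⟩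
  · rintro ⟨⟨h1, h2⟩, h3, h4⟩
    obtain ⟨qa, hqa, hqa'⟩ := Finset.mem_image.1
      ((hfin'.toFinset.image Prod.fst).min'_mem (hne.image _))
    obtain ⟨qb, hqb, hqb'⟩ := Finset.mem_image.1
      ((hfin'.toFinset.image Prod.fst).max'_mem (hne.image _))
    obtain ⟨qc, hqc, hqc'⟩ := Finset.mem_image.1
      ((hfin'.toFinset.image Prod.snd).min'_mem (hne.image _))
    obtain ⟨qd, hqd, hqd'⟩ := Finset.mem_image.1
      ((hfin'.toFinset.image Prod.snd).max'_mem (hne.image _))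
    rw [hfin'.mem_toFinset] at hqa hqb hqc hqd
    have h5 : (z.1, qa.2) ∈ comp S p :=
      pair_box hS hqa hqb z.1 qa.2 (by omega) (by omega) (by omega) (by omega)
    have h6 : (qc.1, z.2) ∈ comp S p :=
      pair_box hS hqc hqd qc.1 z.2 (by omega) (by omega) (by omega) (by omega)
    have h7 := pair_box hS h5 h6 z.1 z.2
    exact h7 (by simp) (by simp) (by simp) (by simp)

end SpanAux

/-- The span of a finite configuration on the square grid is a disjoint union of
full rectangles, any two of which are at L¹-distance at least 3. -/
theorem span_union_of_rectangles (C : Finset (ℤ × ℤ)) :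
    ∃ R : Set (Set (ℤ × ℤ)),
      Span Grid ↑C = ⋃₀ R ∧
      (∀ r ∈ R, ∃ x₀ x₁ y₀ y₁ : ℤ, r = Set.Icc x₀ x₁ ×ˢ Set.Icc y₀ y₁) ∧
      (∀ r ∈ R, ∀ s ∈ R, r ≠ s → ∀ p ∈ r, ∀ q ∈ s,
        3 ≤ |p.1 - q.1| + |p.2 - q.2|) := by
  classical
  set S := Span Grid (↑C : Set (ℤ × ℤ)) with hSdef
  have hS : SpanAux.Closed S := SpanAux.span_closed _
  have hfin : S.Finite := SpanAux.span_finite C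
  refine ⟨{r | ∃ p ∈ S, r = SpanAux.comp S p}, ?_, ?_, ?_⟩
  · ext z
    simp only [Set.mem_sUnion, Set.mem_setOf_eq]
    constructor
    · intro hz
      exact ⟨SpanAux.comp S z, ⟨z, hz, rfl⟩, SpanAux.mem_comp_self hz⟩
    · rintro ⟨r, ⟨p, hp, rfl⟩, hz⟩
      exact hz.1
  · rintro r ⟨p, hp, rfl⟩
    exact SpanAux.comp_is_rect hS hfin hp
  · rintro r ⟨p, hp, rfl⟩ s ⟨q, hq, rfl⟩ hrs p' hp' q' hq'
    by_contra hlt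
    push_neg at hlt
    have hdist : |p'.1 - q'.1| + |p'.2 - q'.2| ≤ 2 := by
      have := Int.lt_iff_add_one_le.mp hlt
      linarith
    have hstep : SpanAux.StepRel S p' q' := ⟨hp'.1, hq'.1, hdist⟩
    have hmem : q' ∈ SpanAux.comp S p := ⟨hq'.1, hp'.2.tail hstep⟩
    exact hrs ((SpanAux.comp_eq_of_mem hmem).symm.trans (SpanAux.comp_eq_of_mem hq'))
end

section
/- On the triangular grid with unlabeled coins, if configuration A can be re-arranged into a different configuration B by valid 2-adjacent moves, and B contains no triangle, no connected component of size ≥ 4, and no pair of components of sizes ≥ 3 and ≥ 2 respectively, then B is reachable from A by a single valid move. -/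
/-- A valid 2-adjacent move on board `G`: take a token at `q ∈ C`, place it at an
unoccupied `p` adjacent to at least 2 tokens of `C` other than `q`. -/
def ValidMove {P : Type*} [DecidableEq P] (G : SimpleGraph P) (C C' : Finset P) : Prop :=
  ∃ q ∈ C, ∃ p, p ∉ C ∧
    (∃ a ∈ C.erase q, ∃ b ∈ C.erase q, a ≠ b ∧ G.Adj p a ∧ G.Adj p b) ∧
    C' = insert p (C.erase q)

/-- Reachability by a finite sequence of valid 2-adjacent moves. -/
def Reach {P : Type*} [DecidableEq P] (G : SimpleGraph P) : Finset P → Finset P → Prop :=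
  Relation.ReflTransGen (ValidMove G)


/-- The triangular grid on ℤ²: `(x,y)` is adjacent to `(x±1,y)`, `(x,y±1)`,
`(x+1,y−1)`, `(x−1,y+1)`; equivalently `a² + ab + b² = 1` for the difference `(a,b)`. -/
def TriGrid : SimpleGraph (ℤ × ℤ) where
  Adj p q := (p.1 - q.1)^2 + (p.1 - q.1) * (p.2 - q.2) + (p.2 - q.2)^2 = 1
  symm := by constructor; intro p q h; linear_combination h
  loopless := by constructor; intro p; simp

/-- Connectivity within a configuration: a path through occupied positions. -/
def ConnIn (B : Finset (ℤ × ℤ)) : (ℤ × ℤ) → (ℤ × ℤ) → Prop :=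
  Relation.ReflTransGen (fun u v => u ∈ B ∧ v ∈ B ∧ TriGrid.Adj u v)

/-- The connected component of `x` in the configuration `B`. -/
def CompOf (B : Finset (ℤ × ℤ)) (x : ℤ × ℤ) : Set (ℤ × ℤ) :=
  {y ∈ (↑B : Set (ℤ × ℤ)) | ConnIn B x y}

/-- On the triangular grid: if `A` can be re-arranged into a different `B`, and `B`
has no triangle, no component of size ≥ 4, and no pair of components of sizes ≥ 3
and ≥ 2, then `B` is reachable from `A` in a single valid move. -/
theorem tri_condition4 (A B : Finset (ℤ × ℤ))
    (hreach : Reach TriGrid A B) (hne : A ≠ B)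
    (htri : ¬∃ a ∈ B, ∃ b ∈ B, ∃ c ∈ B,
      TriGrid.Adj a b ∧ TriGrid.Adj b c ∧ TriGrid.Adj a c)
    (h4 : ∀ x ∈ B, (CompOf B x).ncard ≤ 3)
    (h32 : ¬∃ x ∈ B, ∃ y ∈ B, ¬ConnIn B x y ∧
      3 ≤ (CompOf B x).ncard ∧ 2 ≤ (CompOf B y).ncard) :
    ValidMove TriGrid A B := by
  have main : ∀ C, Reach TriGrid C B → C = B ∨ ValidMove TriGrid C B := by
    intro C hC
    induction hC using Relation.ReflTransGen.head_induction_on with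
    | refl => exact Or.inl rfl
    | head hCD hDB ih =>
      rename_i C D
      rcases ih with rfl | hDBm
      · exact Or.inr hCD
      obtain ⟨q, hqD, p, hpD, ⟨a, haDq, b, hbDq, hab, hpa, hpb⟩, hBeq⟩ := hDBm
      obtain ⟨r, hrC, s, hsC, ⟨a', ha'Cr, b', hb'Cr, hab', hsa', hsb'⟩, hDeq⟩ := hCD
      have hpDq : p ∉ D.erase q := fun h => hpD (Finset.mem_of_mem_erase h)
      have hpB : p ∈ B := hBeq ▸ Finset.mem_insert_self p _
      have hBe : B.erase p = D.erase q := by rw [hBeq, Finset.erase_insert hpDq]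
      have haB : a ∈ B := hBeq ▸ Finset.mem_insert_of_mem haDq
      have hbB : b ∈ B := hBeq ▸ Finset.mem_insert_of_mem hbDq
      have hap : a ≠ p := fun h => hpD (h ▸ Finset.mem_of_mem_erase haDq)
      have hbp : b ≠ p := fun h => hpD (h ▸ Finset.mem_of_mem_erase hbDq)
      have hnab : ¬ TriGrid.Adj a b := fun h => htri ⟨p, hpB, a, haB, b, hbB, hpa, h, hpb⟩
      have hconnpa : ConnIn B p a := Relation.ReflTransGen.single ⟨hpB, haB, hpa⟩
      have hconnpb : ConnIn B p b := Relation.ReflTransGen.single ⟨hpB, hbB, hpb⟩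
      have hfin : (CompOf B p).Finite :=
        Set.Finite.subset B.finite_toSet (fun y hy => hy.1)
      have hsub : ({p, a, b} : Set (ℤ × ℤ)) ⊆ CompOf B p := by
        rintro y (rfl | rfl | rfl)
        · exact ⟨hpB, Relation.ReflTransGen.refl⟩
        · exact ⟨haB, hconnpa⟩
        · exact ⟨hbB, hconnpb⟩
      have hn3 : ({p, a, b} : Set (ℤ × ℤ)).ncard = 3 := by
        rw [Set.ncard_insert_of_notMem (by
          simp only [Set.mem_insert_iff, Set.mem_singleton_iff]
          push_neg
          exact ⟨hap.symm, hbp.symm⟩), Set.ncard_pair hab]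
      have hcomp : CompOf B p = {p, a, b} :=
        (Set.eq_of_subset_of_ncard_le hsub (by rw [hn3]; exact h4 p hpB) hfin).symm
      have hstar : ∀ u v, u ∈ B → v ∈ B → TriGrid.Adj u v → u = p ∨ v = p := by
        intro u v huB hvB huv
        by_contra hcon
        push_neg at hcon
        obtain ⟨hup, hvp⟩ := hcon
        by_cases hc : ConnIn B p u
        · have huC : u ∈ CompOf B p := ⟨huB, hc⟩
          have hvC : v ∈ CompOf B p :=
            ⟨hvB, hc.trans (Relation.ReflTransGen.single ⟨huB, hvB, huv⟩)⟩
          rw [hcomp] at huC hvC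
          rcases huC with rfl | rfl | rfl
          · exact hup rfl
          · rcases hvC with rfl | rfl | rfl
            · exact hvp rfl
            · exact huv.ne rfl
            · exact hnab huv
          · rcases hvC with rfl | rfl | rfl
            · exact hvp rfl
            · exact hnab huv.symm
            · exact huv.ne rfl
        · apply h32
          refine ⟨p, hpB, u, huB, hc, by rw [hcomp]; exact hn3.ge, ?_⟩
          have hsub2 : ({u, v} : Set (ℤ × ℤ)) ⊆ CompOf B u := by
            rintro y (rfl | rfl)
            · exact ⟨huB, Relation.ReflTransGen.refl⟩
            · exact ⟨hvB, Relation.ReflTransGen.single ⟨huB, hvB, huv⟩⟩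
          calc (2 : ℕ) = ({u, v} : Set (ℤ × ℤ)).ncard := (Set.ncard_pair huv.ne).symm
            _ ≤ (CompOf B u).ncard :=
              Set.ncard_le_ncard hsub2 (Set.Finite.subset B.finite_toSet (fun y hy => hy.1))
      have hse : s ∉ C.erase r := fun h => hsC (Finset.mem_of_mem_erase h)
      have hDs : D.erase s = C.erase r := by rw [hDeq, Finset.erase_insert hse]
      by_cases hsq : s = q
      · have hCr : C.erase r = B.erase p := by rw [← hDs, hsq, ← hBe]
        by_cases hrp : r = p
        · left
          calc C = insert r (C.erase r) := (Finset.insert_erase hrC).symm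
            _ = insert p (B.erase p) := by rw [hCr, hrp]
            _ = B := Finset.insert_erase hpB
        · right
          refine ⟨r, hrC, p, ?_, ⟨a, ?_, b, ?_, hab, hpa, hpb⟩, ?_⟩
          · intro hpC
            have : p ∈ C.erase r := Finset.mem_erase.mpr ⟨fun h => hrp h.symm, hpC⟩
            rw [hCr] at this
            exact Finset.notMem_erase p B this
          · rw [hCr, hBe]; exact haDq
          · rw [hCr, hBe]; exact hbDq
          · rw [hCr]; exact (Finset.insert_erase hpB).symm
      · exfalso
        have hsD : s ∈ D := hDeq ▸ Finset.mem_insert_self s _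
        have hsBe : s ∈ B.erase p := by rw [hBe]; exact Finset.mem_erase.mpr ⟨hsq, hsD⟩
        have hsB : s ∈ B := Finset.mem_of_mem_erase hsBe
        have hsp : s ≠ p := (Finset.mem_erase.mp hsBe).1
        have claim : ∀ w, w ∈ C.erase r → TriGrid.Adj s w → w = q := by
          intro w hw hadj
          by_contra hwq
          have hwD : w ∈ D := Finset.mem_of_mem_erase (hDs ▸ hw : w ∈ D.erase s)
          have hwBe : w ∈ B.erase p := by rw [hBe]; exact Finset.mem_erase.mpr ⟨hwq, hwD⟩
          have hwB : w ∈ B := Finset.mem_of_mem_erase hwBe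
          have hwp : w ≠ p := (Finset.mem_erase.mp hwBe).1
          rcases hstar s w hsB hwB hadj with h | h
          · exact hsp h
          · exact hwp h
        exact hab' ((claim a' ha'Cr hsa').trans (claim b' hb'Cr hsb').symm)
  rcases main A hreach with h | h
  · exact absurd h hne
  · exact h
end
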